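/- Let k ∈ C(S¹) with ρ := ∫₀¹ k(s)² ds > 0, and let σ ∈ C²(S¹) be the unique periodic solution of ∂_{ss}σ − k²σ = −1. Then e^{−ρ/2}/ρ ≤ σ(s) ≤ 1 + 1/ρ for all s ∈ S¹. -/

import Mathlib

open Real MeasureTheory intervalIntegral

noncomputable section

/-- Bounds on the solution of the periodic Schrödinger problem `∂_ss σ - k² σ = -1`:
`e^{-ρ/2}/ρ ≤ σ ≤ 1 + 1/ρ`, where `ρ = ∫ k²`. -/
theorem stmt12 (k σ : ℝ → ℝ) (ρ : ℝ)
    (hk : Continuous k) (hperk : Function.Periodic k 1)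
    (hσ : ContDiff ℝ 2 σ) (hperσ : Function.Periodic σ 1)
    (hρ : ρ = ∫ s in (0:ℝ)..1, k s ^ 2) (hρpos : 0 < ρ)
    (hode : ∀ s, deriv (deriv σ) s - k s ^ 2 * σ s = -1) :
    ∀ s, Real.exp (-ρ / 2) / ρ ≤ σ s ∧ σ s ≤ 1 + 1 / ρ := by
  -- Regularity
  have hσd : Differentiable ℝ σ := hσ.differentiable two_ne_zero
  have hσ1 : ContDiff ℝ 1 (deriv σ) := by
    have h2 : ContDiff ℝ ((1:ℕ) + 1) σ := by exact_mod_cast hσ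
    exact (contDiff_succ_iff_deriv.mp h2).2.2
  have hσ'd : Differentiable ℝ (deriv σ) := hσ1.differentiable one_ne_zero
  have hσ'c : Continuous (deriv σ) := hσ'd.continuous
  have hσ''c : Continuous (deriv (deriv σ)) := hσ1.continuous_deriv le_rfl
  have hσc : Continuous σ := hσd.continuous
  have hode' : ∀ s, deriv (deriv σ) s = k s ^ 2 * σ s - 1 := fun s => by linarith [hode s]
  -- Periodicity of derivatives and periodic reduction
  have hperσ' : Function.Periodic (deriv σ) 1 := by
    intro x
    have h : (fun y => σ (y + 1)) = σ := funext fun y => hperσ y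
    rw [← deriv_comp_add_const σ 1, h]
  have hred : ∀ (f : ℝ → ℝ), Function.Periodic f 1 → ∀ a s : ℝ,
      f (a + Int.fract (s - a)) = f s := by
    intro f hf a s
    have h : a + Int.fract (s - a) = s - (⌊s - a⌋ : ℤ) * 1 := by
      rw [Int.fract]; push_cast; ring
    rw [h, hf.sub_int_mul_eq]
  have hmem : ∀ a s : ℝ, a + Int.fract (s - a) ∈ Set.Icc a (a + 1) := by
    intro a s
    constructor
    · linarith [Int.fract_nonneg (s - a)]
    · linarith [(Int.fract_lt_one (s - a)).le]
  -- The global minimum point s₀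
  obtain ⟨s₀, hs₀mem, hs₀min⟩ := isCompact_Icc.exists_isMinOn
    (Set.nonempty_Icc.2 (by norm_num : (0:ℝ) ≤ 1)) hσc.continuousOn
  have hmin : ∀ s, σ s₀ ≤ σ s := by
    intro s
    rw [← hred σ hperσ 0 s]
    exact isMinOn_iff.mp hs₀min _ (by simpa using hmem 0 s)
  -- First derivative vanishes at the minimum
  have hd0 : deriv σ s₀ = 0 := by
    have : IsLocalMin σ s₀ := Filter.Eventually.of_forall fun x => hmin x
    exact this.deriv_eq_zero
  -- Second derivative is nonnegative at the minimum
  have hd2 : 0 ≤ deriv (deriv σ) s₀ := by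
    by_contra hcon
    push_neg at hcon
    have hopen : IsOpen {t : ℝ | deriv (deriv σ) t < 0} := isOpen_lt hσ''c continuous_const
    obtain ⟨ε, hε, hball⟩ := Metric.isOpen_iff.mp hopen s₀ hcon
    set δ := ε / 2 with hδdef
    have hδ : 0 < δ := by positivity
    have hsub : Set.Icc s₀ (s₀ + δ) ⊆ {t : ℝ | deriv (deriv σ) t < 0} := by
      intro t ht
      apply hball
      rw [Metric.mem_ball, Real.dist_eq, abs_lt]
      constructor <;> [linarith [ht.1]; linarith [ht.2]]
    have hanti : StrictAntiOn (deriv σ) (Set.Icc s₀ (s₀ + δ)) := by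
      apply strictAntiOn_of_deriv_neg (convex_Icc _ _) (hσ'd.continuous.continuousOn)
      intro t ht
      rw [interior_Icc] at ht
      exact hsub ⟨ht.1.le, ht.2.le⟩
    have hneg : ∀ t ∈ Set.Ioc s₀ (s₀ + δ), deriv σ t < 0 := by
      intro t ht
      have := hanti (Set.left_mem_Icc.mpr (by linarith)) ⟨ht.1.le, ht.2⟩ ht.1
      rwa [hd0] at this
    have hanti2 : StrictAntiOn σ (Set.Icc s₀ (s₀ + δ)) := by
      apply strictAntiOn_of_deriv_neg (convex_Icc _ _) (hσd.continuous.continuousOn)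
      intro t ht
      rw [interior_Icc] at ht
      exact hneg t ⟨ht.1, ht.2.le⟩
    have := hanti2 (Set.left_mem_Icc.mpr (by linarith))
      (Set.right_mem_Icc.mpr (by linarith)) (by linarith)
    exact absurd (hmin (s₀ + δ)) (by linarith)
  -- Positivity of σ
  have hpos : 0 < σ s₀ := by
    have h1 : 1 ≤ k s₀ ^ 2 * σ s₀ := by have := hode s₀; linarith
    by_contra h
    push_neg at h
    nlinarith [sq_nonneg (k s₀)]
  have hposa : ∀ s, 0 < σ s := fun s => lt_of_lt_of_le hpos (hmin s)
  -- Integral identities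
  have hperk2 : Function.Periodic (fun t => k t ^ 2) 1 := fun x => by simp [hperk x]
  have hρ' : ρ = ∫ t in s₀..s₀ + 1, k t ^ 2 := by
    rw [hρ, show (1:ℝ) = 0 + 1 by norm_num, hperk2.intervalIntegral_add_eq 0 s₀]
    norm_num
  have hFTC : ∀ a b : ℝ, (∫ t in a..b, deriv (deriv σ) t) = deriv σ b - deriv σ a := fun a b =>
    intervalIntegral.integral_deriv_eq_sub (fun t _ => hσ'd t) (hσ''c.intervalIntegrable a b)
  have hcont1 : Continuous (fun t => k t ^ 2 * σ t - 1) := by fun_prop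
  have hcont2 : Continuous (fun t => k t ^ 2 * σ t) := by fun_prop
  have hFTC' : ∀ a b : ℝ, (∫ t in a..b, (k t ^ 2 * σ t - 1)) = deriv σ b - deriv σ a := by
    intro a b
    rw [← hFTC a b]
    exact intervalIntegral.integral_congr fun t _ => (hode' t).symm
  have hint1 : (∫ t in s₀..s₀ + 1, k t ^ 2 * σ t) = 1 := by
    have h0 : (∫ t in s₀..s₀ + 1, (k t ^ 2 * σ t - 1)) = 0 := by
      rw [hFTC', hperσ' s₀, sub_self]
    rw [intervalIntegral.integral_sub (hcont2.intervalIntegrable _ _)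
      (intervalIntegrable_const)] at h0
    simp at h0
    linarith
  -- m * ρ ≤ 1
  have hmρ : σ s₀ * ρ ≤ 1 := by
    have h1 : (∫ t in s₀..s₀ + 1, σ s₀ * k t ^ 2) ≤ ∫ t in s₀..s₀ + 1, k t ^ 2 * σ t := by
      apply intervalIntegral.integral_mono_on (by linarith)
        ((continuous_const.mul (hk.pow 2)).intervalIntegrable _ _)
        (hcont2.intervalIntegrable _ _)
      intro t _
      rw [mul_comm (k t ^ 2) (σ t)]
      exact mul_le_mul_of_nonneg_right (hmin t) (sq_nonneg _)
    rw [intervalIntegral.integral_const_mul, ← hρ', hint1] at h1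
    exact h1
  -- deriv σ t ≤ 1 on [s₀, s₀+1]
  have hd1 : ∀ t ∈ Set.Icc s₀ (s₀ + 1), deriv σ t ≤ 1 := by
    intro t ht
    have h1 : deriv σ t = ∫ u in s₀..t, (k u ^ 2 * σ u - 1) := by rw [hFTC', hd0, sub_zero]
    have h2 : (∫ u in s₀..t, (k u ^ 2 * σ u - 1)) ≤ ∫ u in s₀..t, k u ^ 2 * σ u := by
      apply intervalIntegral.integral_mono_on ht.1 (hcont1.intervalIntegrable _ _)
        (hcont2.intervalIntegrable _ _)
      intro u _; linarith
    have h3 : (∫ u in s₀..t, k u ^ 2 * σ u) ≤ ∫ u in s₀..s₀ + 1, k u ^ 2 * σ u := by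
      apply intervalIntegral.integral_mono_interval le_rfl ht.1 ht.2
      · filter_upwards with u
        exact mul_nonneg (sq_nonneg _) (hposa u).le
      · exact hcont2.intervalIntegrable _ _
    rw [hint1] at h3
    linarith
  -- σ ≤ m + 1 on [s₀, s₀+1]
  have hub : ∀ s ∈ Set.Icc s₀ (s₀ + 1), σ s ≤ σ s₀ + 1 := by
    intro s hs
    have h1 : (∫ t in s₀..s, deriv σ t) = σ s - σ s₀ :=
      intervalIntegral.integral_deriv_eq_sub (fun t _ => hσd t) (hσ'c.intervalIntegrable _ _)
    have h2 : (∫ t in s₀..s, deriv σ t) ≤ ∫ t in s₀..s, (1 : ℝ) := by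
      apply intervalIntegral.integral_mono_on hs.1 (hσ'c.intervalIntegrable _ _)
        intervalIntegrable_const
      intro t ht
      exact hd1 t ⟨ht.1, le_trans ht.2 hs.2⟩
    simp at h2
    have : s - s₀ ≤ 1 := by linarith [hs.2]
    linarith
  -- The global maximum point s₁
  obtain ⟨s₁, hs₁, hs₁max⟩ := isCompact_Icc.exists_isMaxOn
    (Set.nonempty_Icc.2 (by linarith : s₀ ≤ s₀ + 1)) hσc.continuousOn
  have hmax : ∀ s ∈ Set.Icc s₀ (s₀ + 1), σ s ≤ σ s₁ := fun s hs => isMaxOn_iff.mp hs₁max s hs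
  have hmaxg : ∀ s, σ s ≤ σ s₁ := by
    intro s
    rw [← hred σ hperσ s₀ s]
    exact hmax _ (hmem s₀ s)
  -- The function φ = σ'/σ and its Riccati equation
  set φ : ℝ → ℝ := fun t => deriv σ t / σ t with hφdef
  have hφd : ∀ t, HasDerivAt φ (k t ^ 2 - 1 / σ t - φ t ^ 2) t := by
    intro t
    have h1 : HasDerivAt (deriv σ) (deriv (deriv σ) t) t := (hσ'd t).hasDerivAt
    have h2 : HasDerivAt σ (deriv σ t) t := (hσd t).hasDerivAt
    have h3 := h1.div h2 (hposa t).ne'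
    refine h3.congr_deriv ?_
    rw [hode' t]
    have h4 := (hposa t).ne'
    simp only [hφdef]
    field_simp [hφdef]
  have hφc : Continuous φ := hσ'c.div hσc fun t => (hposa t).ne'
  have hφcont : Continuous (fun t => k t ^ 2 - 1 / σ t - φ t ^ 2) := by
    apply Continuous.sub (Continuous.sub (hk.pow 2) _) (hφc.pow 2)
    exact continuous_const.div hσc fun t => (hposa t).ne'
  have hφ0 : φ s₀ = 0 := by simp [hφdef, hd0]
  have hφ1 : φ (s₀ + 1) = 0 := by simp [hφdef, hperσ' s₀, hd0]
  have hφFTC : ∀ a b : ℝ, (∫ t in a..b, (k t ^ 2 - 1 / σ t - φ t ^ 2)) = φ b - φ a := fun a b =>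
    intervalIntegral.integral_eq_sub_of_hasDerivAt (fun t _ => hφd t)
      (hφcont.intervalIntegrable a b)
  -- ∫ 1/σ ≤ ρ
  have hcσ : Continuous (fun t => 1 / σ t) := continuous_const.div hσc fun t => (hposa t).ne'
  have hint2 : (∫ t in s₀..s₀ + 1, 1 / σ t) ≤ ρ := by
    have h0 : (∫ t in s₀..s₀ + 1, (k t ^ 2 - 1 / σ t - φ t ^ 2)) = 0 := by
      rw [hφFTC, hφ0, hφ1, sub_zero]
    rw [intervalIntegral.integral_sub
      ((show Continuous fun t => k t ^ 2 - 1 / σ t from (hk.pow 2).sub hcσ).intervalIntegrable _ _)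
      ((show Continuous fun t => φ t ^ 2 from hφc.pow 2).intervalIntegrable _ _),
      intervalIntegral.integral_sub
      ((show Continuous fun t => k t ^ 2 from hk.pow 2).intervalIntegrable _ _)
      (hcσ.intervalIntegrable _ _)] at h0
    have hφ2 : 0 ≤ ∫ t in s₀..s₀ + 1, φ t ^ 2 :=
      intervalIntegral.integral_nonneg (by linarith) fun t _ => sq_nonneg _
    rw [hρ']
    linarith
  -- σ s₁ ≥ 1/ρ
  have hmaxρ : 1 / ρ ≤ σ s₁ := by
    have h1 : (∫ t in s₀..s₀ + 1, 1 / σ s₁) ≤ ∫ t in s₀..s₀ + 1, 1 / σ t := by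
      apply intervalIntegral.integral_mono_on (by linarith) intervalIntegrable_const
        (hcσ.intervalIntegrable _ _)
      intro t ht
      exact one_div_le_one_div_of_le (hposa t) (hmax t ht)
    rw [intervalIntegral.integral_const, smul_eq_mul, show s₀ + 1 - s₀ = (1:ℝ) by ring,
      one_mul] at h1
    have h2 : 1 / σ s₁ ≤ ρ := le_trans h1 hint2
    rw [div_le_iff₀ (hposa s₁)] at h2
    rw [div_le_iff₀ hρpos]
    linarith [mul_comm ρ (σ s₁)]
  -- pointwise bounds on φ over [s₀, s₀+1]
  have hkint : ∀ a b, a ∈ Set.Icc s₀ (s₀ + 1) → b ∈ Set.Icc s₀ (s₀ + 1) → a ≤ b →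
      (∫ t in a..b, k t ^ 2) ≤ ρ := by
    intro a b ha hb hab
    rw [hρ']
    apply intervalIntegral.integral_mono_interval ha.1 hab hb.2
    · filter_upwards with u; positivity
    · exact (hk.pow 2).intervalIntegrable _ _
  have hφub : ∀ t ∈ Set.Icc s₀ (s₀ + 1), φ t ≤ ρ := by
    intro t ht
    have h1 : φ t = ∫ u in s₀..t, (k u ^ 2 - 1 / σ u - φ u ^ 2) := by rw [hφFTC, hφ0, sub_zero]
    have h2 : (∫ u in s₀..t, (k u ^ 2 - 1 / σ u - φ u ^ 2)) ≤ ∫ u in s₀..t, k u ^ 2 := by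
      apply intervalIntegral.integral_mono_on ht.1 (hφcont.intervalIntegrable _ _)
        ((hk.pow 2).intervalIntegrable _ _)
      intro u _
      have := (hposa u).le
      have h3 : 0 ≤ 1 / σ u := by positivity
      nlinarith [sq_nonneg (φ u), Pi.pow_apply k 2 u]
    have h4 := hkint s₀ t (Set.left_mem_Icc.mpr (by linarith)) ht ht.1
    linarith
  have hφlb : ∀ t ∈ Set.Icc s₀ (s₀ + 1), -ρ ≤ φ t := by
    intro t ht
    have h1 : -φ t = ∫ u in t..s₀ + 1, (k u ^ 2 - 1 / σ u - φ u ^ 2) := by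
      rw [hφFTC, hφ1, zero_sub]
    have h2 : (∫ u in t..s₀ + 1, (k u ^ 2 - 1 / σ u - φ u ^ 2)) ≤ ∫ u in t..s₀ + 1, k u ^ 2 := by
      apply intervalIntegral.integral_mono_on ht.2 (hφcont.intervalIntegrable _ _)
        ((hk.pow 2).intervalIntegrable _ _)
      intro u _
      have := (hposa u).le
      have h3 : 0 ≤ 1 / σ u := by positivity
      nlinarith [sq_nonneg (φ u), Pi.pow_apply k 2 u]
    have h4 := hkint t (s₀ + 1) ht (Set.right_mem_Icc.mpr (by linarith)) ht.2
    linarith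
  -- FTC for log σ
  have hlog : ∀ a b : ℝ, (∫ t in a..b, φ t) = Real.log (σ b) - Real.log (σ a) := by
    intro a b
    apply intervalIntegral.integral_eq_sub_of_hasDerivAt
      (fun t _ => HasDerivAt.log (hσd t).hasDerivAt (hposa t).ne')
      (hφc.intervalIntegrable a b)
  -- key: log σ s₀ ≥ log σ s₁ - ρ/2
  have hkey : Real.log (σ s₁) - ρ / 2 ≤ Real.log (σ s₀) := by
    rcases le_or_gt s₁ (s₀ + 1/2) with hc | hc
    · have h1 : (∫ t in s₀..s₁, φ t) ≤ ∫ t in s₀..s₁, ρ := by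
        apply intervalIntegral.integral_mono_on hs₁.1 (hφc.intervalIntegrable _ _)
          intervalIntegrable_const
        intro t ht
        exact hφub t ⟨ht.1, le_trans ht.2 hs₁.2⟩
      rw [hlog] at h1
      simp at h1
      have h2 : (s₁ - s₀) * ρ ≤ ρ / 2 := by nlinarith [hs₁.1]
      linarith
    · have h1 : (∫ t in s₁..s₀ + 1, -ρ) ≤ ∫ t in s₁..s₀ + 1, φ t := by
        apply intervalIntegral.integral_mono_on hs₁.2 intervalIntegrable_const
          (hφc.intervalIntegrable _ _)
        intro t ht
        exact hφlb t ⟨le_trans hs₁.1 ht.1, ht.2⟩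
      rw [hlog] at h1
      simp at h1
      have hper : σ (s₀ + 1) = σ s₀ := hperσ s₀
      rw [hper] at h1
      have h2 : -(ρ / 2) ≤ -((s₀ + 1 - s₁) * ρ) := by nlinarith [hs₁.2]
      linarith
  -- lower bound for the minimum
  have hlb : Real.exp (-ρ / 2) / ρ ≤ σ s₀ := by
    have h5 : Real.log (1 / ρ) - ρ / 2 ≤ Real.log (σ s₀) := by
      have := Real.log_le_log (by positivity) hmaxρ
      linarith
    calc Real.exp (-ρ / 2) / ρ = Real.exp (Real.log (1 / ρ) - ρ / 2) := by
          rw [neg_div, Real.exp_neg, Real.exp_sub, Real.exp_log (by positivity)]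
          ring
      _ ≤ Real.exp (Real.log (σ s₀)) := Real.exp_le_exp.mpr h5
      _ = σ s₀ := Real.exp_log hpos
  -- conclusion
  intro s
  constructor
  · exact le_trans hlb (hmin s)
  · have h1 : σ s ≤ σ s₁ := hmaxg s
    have h2 : σ s₁ ≤ σ s₀ + 1 := hub s₁ hs₁
    have h3 : σ s₀ ≤ 1 / ρ := by
      rw [le_div_iff₀ hρpos]
      exact hmρ
    linarith
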